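/- arXiv:1804.02608 — 3 statements merged into one kernel-verified Lean document; each statement's English description precedes it below -/
import Mathlib

section
/- Let p_1, …, p_n and q be in [0,1] with q ≥ 0, let p_v(S) = g·Σ_{k=0}^{n} Δ_k·Σ_{S' ⊆ S, |S'|=k} Π_{u∈S'} p_u describe a vertex follow probability as a function of its set of parent probabilities, where Δ_k = Σ_{i=0}^{k} (-1)^{k-i} C(k,i) f(i) for a function f : ℕ → ℝ, and g > 0 a constant. If the parent set {1,…,n} with probabilities p_1,…,p_n is augmented by one more parent with follow probability q, and the new follow probability equals (1−q)·p_v({1,…,n}) + q·g·Σ_{k=0}^{n} Δ'_k·Σ_{|S'|=k} Π_{u∈S'} p_u with Δ'_k = Σ_{i=0}^{k} (-1)^{k-i} C(k,i) f(i+1), then the new follow probability equals g·Σ_{k=0}^{n+1} Δ_k·Σ_{S' ⊆ {1,…,n+1}, |S'|=k} Π_{u∈S'} p_u (where p_{n+1} = q). -/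
/-- The `k`-th forward finite difference of `f` at `0`:
`Δ_k = Σ_{i=0}^{k} (-1)^(k-i) C(k,i) f(i)`. -/
noncomputable def Delta (f : ℕ → ℝ) (k : ℕ) : ℝ :=
  ∑ i ∈ Finset.range (k + 1), (-1 : ℝ) ^ (k - i) * (Nat.choose k i) * f i

lemma delta_eq (f : ℕ → ℝ) (k : ℕ) : Delta f k = (fwdDiff 1)^[k] f 0 := by
  rw [fwdDiff_iter_eq_sum_shift]
  simp [Delta, mul_assoc]

lemma delta_succ (f : ℕ → ℝ) (k : ℕ) :
    Delta f (k + 1) = Delta (fun i => f (i + 1)) k - Delta f k := by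
  rw [delta_eq, Function.iterate_succ_apply, ← delta_eq]
  unfold Delta fwdDiff
  rw [← Finset.sum_sub_distrib]
  exact Finset.sum_congr rfl fun i _ => by ring

lemma powerset_split (n k : ℕ) (p : ℕ → ℝ) :
    ∑ S ∈ (Finset.range (n + 1)).powersetCard (k + 1), ∏ u ∈ S, p u =
      (∑ S ∈ (Finset.range n).powersetCard (k + 1), ∏ u ∈ S, p u) +
        p n * ∑ S ∈ (Finset.range n).powersetCard k, ∏ u ∈ S, p u := by
  have hn : n ∉ Finset.range n := by simp
  rw [Finset.range_add_one, Finset.powersetCard_succ_insert hn, Finset.sum_union]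
  · congr 1
    rw [Finset.sum_image, Finset.mul_sum]
    · refine Finset.sum_congr rfl fun S hS => ?_
      have hnS : n ∉ S := fun h => hn (Finset.mem_powersetCard.mp hS |>.1 h)
      rw [Finset.prod_insert hnS]
    · intro S1 h1 S2 h2 h
      have hn1 : n ∉ S1 := fun h' => hn (Finset.mem_powersetCard.mp h1 |>.1 h')
      have hn2 : n ∉ S2 := fun h' => hn (Finset.mem_powersetCard.mp h2 |>.1 h')
      have := congrArg (Finset.erase · n) h
      simpa [Finset.erase_insert hn1, Finset.erase_insert hn2] using this
  · rw [Finset.disjoint_left]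
    intro S hS hS'
    have hnS : n ∉ S := fun h => hn (Finset.mem_powersetCard.mp hS |>.1 h)
    obtain ⟨T, hT, rfl⟩ := Finset.mem_image.mp hS'
    exact hnS (Finset.mem_insert_self n T)

/-- Inductive step for the follow probability with independent parents:
adding one more parent, with follow probability `q = p n`, to the parent set
`{0, …, n-1}`.  The old follow probability is
`g · Σ_{k=0}^{n} Δ_k · Σ_{S ⊆ {0,…,n-1}, |S|=k} Π_{u∈S} p u`, the new one is
the stated mixture with `Δ'_k = Σ_i (-1)^(k-i) C(k,i) f(i+1)`, and the result
is the same formula over the enlarged parent set `{0, …, n}`. -/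
theorem followProb_add_parent (n : ℕ) (f : ℕ → ℝ) (g : ℝ) (hg : 0 < g)
    (p : ℕ → ℝ) (hp : ∀ u, u ≤ n → 0 ≤ p u ∧ p u ≤ 1) :
    (1 - p n) *
        (g * ∑ k ∈ Finset.range (n + 1), Delta f k *
          ∑ S ∈ (Finset.range n).powersetCard k, ∏ u ∈ S, p u) +
      p n *
        (g * ∑ k ∈ Finset.range (n + 1), Delta (fun i => f (i + 1)) k *
          ∑ S ∈ (Finset.range n).powersetCard k, ∏ u ∈ S, p u) =
      g * ∑ k ∈ Finset.range (n + 2), Delta f k *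
          ∑ S ∈ (Finset.range (n + 1)).powersetCard k, ∏ u ∈ S, p u := by
  have hA0 : ∑ S ∈ (Finset.range n).powersetCard 0, ∏ u ∈ S, p u = 1 := by simp
  have hB0 : ∑ S ∈ (Finset.range (n + 1)).powersetCard 0, ∏ u ∈ S, p u = 1 := by simp
  have hAtop : ∑ S ∈ (Finset.range n).powersetCard (n + 1), ∏ u ∈ S, p u = 0 := by
    rw [Finset.powersetCard_eq_empty.mpr (by simp), Finset.sum_empty]
  rw [Finset.sum_range_succ'
    (fun k => Delta f k * ∑ S ∈ (Finset.range (n + 1)).powersetCard k, ∏ u ∈ S, p u) (n + 1)]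
  have step : ∀ k ∈ Finset.range (n + 1),
      Delta f (k + 1) * ∑ S ∈ (Finset.range (n + 1)).powersetCard (k + 1), ∏ u ∈ S, p u
        = (Delta f (k + 1) * ∑ S ∈ (Finset.range n).powersetCard (k + 1), ∏ u ∈ S, p u)
          + p n * ((Delta (fun i => f (i + 1)) k - Delta f k) *
              ∑ S ∈ (Finset.range n).powersetCard k, ∏ u ∈ S, p u) := by
    intro k _
    rw [powerset_split, delta_succ]; ring
  rw [Finset.sum_congr rfl step, Finset.sum_add_distrib, ← Finset.mul_sum]
  have fold : ∑ k ∈ Finset.range (n + 1),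
      Delta f (k + 1) * ∑ S ∈ (Finset.range n).powersetCard (k + 1), ∏ u ∈ S, p u
      = (∑ k ∈ Finset.range (n + 1),
          Delta f k * ∑ S ∈ (Finset.range n).powersetCard k, ∏ u ∈ S, p u)
        - Delta f 0 := by
    have h1 := Finset.sum_range_succ'
      (fun k => Delta f k * ∑ S ∈ (Finset.range n).powersetCard k, ∏ u ∈ S, p u) (n + 1)
    have h2 := Finset.sum_range_succ
      (fun k => Delta f k * ∑ S ∈ (Finset.range n).powersetCard k, ∏ u ∈ S, p u) (n + 1)
    simp only [hA0, hAtop, mul_one, mul_zero] at h1 h2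
    linarith [h1, h2]
  have diff : ∑ k ∈ Finset.range (n + 1),
      (Delta (fun i => f (i + 1)) k - Delta f k) *
        ∑ S ∈ (Finset.range n).powersetCard k, ∏ u ∈ S, p u
      = (∑ k ∈ Finset.range (n + 1),
          Delta (fun i => f (i + 1)) k * ∑ S ∈ (Finset.range n).powersetCard k, ∏ u ∈ S, p u)
        - ∑ k ∈ Finset.range (n + 1),
          Delta f k * ∑ S ∈ (Finset.range n).powersetCard k, ∏ u ∈ S, p u := by
    rw [← Finset.sum_sub_distrib]
    exact Finset.sum_congr rfl fun k _ => by ring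
  rw [fold, diff, hB0]
  ring
end

section
/- Let a vertex v have n independent parents, where parent u follows the agent with probability p_u ∈ [0,1]. Let the overlap φ of v be the number of parents who followed, and suppose the follow probability of v given overlap φ equals g·f(φ), where g > 0 and f : ℕ → ℝ. Then the unconditional follow probability of v equals g·Σ_{k=0}^{n} Δ_k·Σ_{S ⊆ P, |S|=k} Π_{u∈S} p_u, where P is the parent set and Δ_k = Σ_{i=0}^{k} (-1)^{k-i} C(k,i) f(i). -/
open Finset

/-- A vertex `v` has `n` independent parents, parent `u` following with
probability `p u`.  The overlap `φ` is the number of parents that followed, and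
the follow probability of `v` given overlap `φ` is `g · f φ`.  The unconditional
follow probability, `E[g · f(φ)] = Σ_{S} (Π_{u∈S} p u)(Π_{u∉S} (1 - p u)) · g · f |S|`,
equals `g · Σ_{k=0}^{n} Δ_k · Σ_{S ⊆ P, |S|=k} Π_{u∈S} p u`. -/
theorem followProb_formula (n : ℕ) (f : ℕ → ℝ) (g : ℝ) (hg : 0 < g)
    (p : ℕ → ℝ) (hp : ∀ u, u < n → 0 ≤ p u ∧ p u ≤ 1) :
    ∑ S ∈ (Finset.range n).powerset,
        ((∏ u ∈ S, p u) * (∏ u ∈ Finset.range n \ S, (1 - p u))) * (g * f S.card) =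
      g * ∑ k ∈ Finset.range (n + 1), Delta f k *
          ∑ S ∈ (Finset.range n).powersetCard k, ∏ u ∈ S, p u := by
  set A := Finset.range n with hA
  -- Step 1: expand the product over the complement
  have step1 : ∀ S ∈ A.powerset,
      ((∏ u ∈ S, p u) * (∏ u ∈ A \ S, (1 - p u))) * (g * f S.card)
        = ∑ T ∈ (A \ S).powerset,
            ((-1 : ℝ) ^ T.card * ∏ u ∈ S ∪ T, p u) * (g * f S.card) := by
    intro S hS
    rw [mem_powerset] at hS
    have : ∏ u ∈ A \ S, (1 - p u) = ∏ u ∈ A \ S, ((fun u => -p u) u + (fun _ => (1:ℝ)) u) := by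
      simp [sub_eq_neg_add]
    rw [this, Finset.prod_add]
    simp only [Finset.prod_const_one, mul_one]
    rw [Finset.mul_sum, Finset.sum_mul]
    refine Finset.sum_congr rfl fun T hT => ?_
    rw [mem_powerset] at hT
    have hdisj : Disjoint S T := by
      refine Finset.disjoint_left.2 fun a haS haT => ?_
      exact (Finset.mem_sdiff.1 (hT haT)).2 haS
    rw [Finset.prod_union hdisj]
    have : ∏ u ∈ T, -p u = (-1 : ℝ) ^ T.card * ∏ u ∈ T, p u := by
      rw [← Finset.prod_const, ← Finset.prod_mul_distrib]
      exact Finset.prod_congr rfl fun x _ => by ring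
    rw [this]; ring
  rw [Finset.sum_congr rfl step1]
  -- Step 2: reindex (S, T) with T ⊆ A \ S to (U, S) with S ⊆ U ⊆ A via U = S ∪ T
  have step2 :
      (∑ S ∈ A.powerset, ∑ T ∈ (A \ S).powerset,
          ((-1 : ℝ) ^ T.card * ∏ u ∈ S ∪ T, p u) * (g * f S.card))
        = ∑ U ∈ A.powerset, ∑ S ∈ U.powerset,
            ((-1 : ℝ) ^ (U.card - S.card) * ∏ u ∈ U, p u) * (g * f S.card) := by
    rw [Finset.sum_sigma', Finset.sum_sigma']
    refine Finset.sum_bij' (fun x _ => ⟨x.1 ∪ x.2, x.1⟩) (fun y _ => ⟨y.2, y.1 \ y.2⟩)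
      ?_ ?_ ?_ ?_ ?_
    · rintro ⟨S, T⟩ hx
      simp only [Finset.mem_sigma, Finset.mem_powerset] at hx ⊢
      refine ⟨Finset.union_subset hx.1 (hx.2.trans (Finset.sdiff_subset)), Finset.subset_union_left⟩
    · rintro ⟨U, S⟩ hy
      simp only [Finset.mem_sigma, Finset.mem_powerset] at hy ⊢
      exact ⟨hy.2.trans hy.1, Finset.sdiff_subset_sdiff hy.1 le_rfl⟩
    · rintro ⟨S, T⟩ hx
      simp only [Finset.mem_sigma, Finset.mem_powerset] at hx
      have hdisj : Disjoint S T := by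
        refine Finset.disjoint_left.2 fun a haS haT => ?_
        exact (Finset.mem_sdiff.1 (hx.2 haT)).2 haS
      have : (S ∪ T) \ S = T := by
        rw [Finset.union_sdiff_left]
        exact Finset.sdiff_eq_self_of_disjoint hdisj.symm
      simp [this]
    · rintro ⟨U, S⟩ hy
      simp only [Finset.mem_sigma, Finset.mem_powerset] at hy
      simp [Finset.union_sdiff_of_subset hy.2]
    · rintro ⟨S, T⟩ hx
      simp only [Finset.mem_sigma, Finset.mem_powerset] at hx
      have hdisj : Disjoint S T := by
        refine Finset.disjoint_left.2 fun a haS haT => ?_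
        exact (Finset.mem_sdiff.1 (hx.2 haT)).2 haS
      have hcard : (S ∪ T).card = S.card + T.card := Finset.card_union_of_disjoint hdisj
      simp only [hcard, Nat.add_sub_cancel_left]
  rw [step2]
  -- Step 3: compute the inner sum using sum_powerset_apply_card
  have step3 : ∀ U ∈ A.powerset,
      (∑ S ∈ U.powerset, ((-1 : ℝ) ^ (U.card - S.card) * ∏ u ∈ U, p u) * (g * f S.card))
        = (g * Delta f U.card) * ∏ u ∈ U, p u := by
    intro U _
    have := Finset.sum_powerset_apply_card
      (fun m => ((-1 : ℝ) ^ (U.card - m) * ∏ u ∈ U, p u) * (g * f m)) (x := U)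
    rw [this, Delta, Finset.mul_sum, Finset.sum_mul]
    refine Finset.sum_congr rfl fun m _ => ?_
    rw [nsmul_eq_mul]; ring
  rw [Finset.sum_congr rfl step3]
  -- Step 4: regroup powerset by cardinality
  rw [Finset.sum_powerset A (fun U => (g * Delta f U.card) * ∏ u ∈ U, p u)]
  rw [hA, Finset.card_range]
  simp only [Finset.mul_sum]
  refine Finset.sum_congr rfl fun k _ => Finset.sum_congr rfl fun U hU => ?_
  rw [(Finset.mem_powersetCard.1 hU).2]; ring
end

section
/- Let G = (V, E) be a finite directed acyclic graph and suppose Bernoulli follow events are generated sequentially by a policy (permutation of V) as follows: when v is processed, it succeeds with probability p_v(φ_v) where φ_v is the number of previously-processed in-neighbors of v that succeeded, and p_v is strictly increasing in φ_v. Then every policy maximizing the expected total number of successes Σ_{v∈V} E[X_v] is a linear extension of G (i.e., every vertex is processed after all of its in-neighbors). -/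
open Finset

/-- Expected total number of successes when the vertices in the list are
processed in order: when `v` is processed, its overlap `φ` is the number of
already-successful in-neighbors (the set `s`), and `v` succeeds with
probability `p v φ`, conditionally independently of everything else. -/
noncomputable def expFollows {V : Type*} [DecidableEq V]
    (e : V → V → Prop) [DecidableRel e] (p : V → ℕ → ℝ) :
    List V → Finset V → ℝ
  | [], _ => 0
  | v :: rest, s =>
      let φ := (s.filter (fun u => e u v)).card
      p v φ * (1 + expFollows e p rest (insert v s)) +
        (1 - p v φ) * expFollows e p rest s


section AuxA

variable {V : Type*} [DecidableEq V] (e : V → V → Prop) [DecidableRel e] (p : V → ℕ → ℝ)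

lemma expFollows_cons (v : V) (rest : List V) (s : Finset V) :
    expFollows e p (v :: rest) s =
      p v ((s.filter (fun u => e u v)).card) * (1 + expFollows e p rest (insert v s)) +
        (1 - p v ((s.filter (fun u => e u v)).card)) * expFollows e p rest s := rfl

lemma expFollows_mono (hp01 : ∀ w φ, 0 < p w φ ∧ p w φ < 1)
    (hmono : ∀ w φ φ', φ ≤ φ' → p w φ ≤ p w φ') :
    ∀ (L : List V) (s s' : Finset V), s ⊆ s' →
      expFollows e p L s ≤ expFollows e p L s' := by
  intro L
  induction L with
  | nil => intro s s' _; simp [expFollows]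
  | cons v rest ih =>
    intro s s' hss
    rw [expFollows_cons, expFollows_cons]
    have hφ : (s.filter (fun u => e u v)).card ≤ (s'.filter (fun u => e u v)).card :=
      card_le_card (filter_subset_filter _ hss)
    have hp := hmono v _ _ hφ
    have hA := ih (insert v s) (insert v s') (insert_subset_insert _ hss)
    have hB := ih s s' hss
    have hBA := ih s' (insert v s') (subset_insert _ _)
    obtain ⟨h0, h1⟩ := hp01 v (s.filter (fun u => e u v)).card
    obtain ⟨h0', h1'⟩ := hp01 v (s'.filter (fun u => e u v)).card
    nlinarith [mul_nonneg (sub_nonneg.2 hp)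
        (by linarith : (0:ℝ) ≤ 1 + expFollows e p rest (insert v s') - expFollows e p rest s'),
      mul_nonneg h0.le (sub_nonneg.2 hA), mul_nonneg (by linarith : (0:ℝ) ≤ 1 - p v (s.filter (fun u => e u v)).card) (sub_nonneg.2 hB)]

lemma swap_diff (x y : V) (Q : List V) (s : Finset V) (hxy : ¬ e x y) :
    expFollows e p (y :: x :: Q) s - expFollows e p (x :: y :: Q) s =
      p y ((s.filter (fun u => e u y)).card) *
        (p x (((insert y s).filter (fun u => e u x)).card) -
          p x ((s.filter (fun u => e u x)).card)) *
        (1 + expFollows e p Q (insert x (insert y s)) - expFollows e p Q (insert y s)) := by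
  have h1 : (insert x s).filter (fun u => e u y) = s.filter (fun u => e u y) := by
    rw [filter_insert, if_neg hxy]
  have h2 : insert y (insert x s) = insert x (insert y s) := Finset.insert_comm _ _ _
  rw [expFollows_cons, expFollows_cons, expFollows_cons, expFollows_cons,
    expFollows_cons, expFollows_cons, h1, h2]
  ring

lemma swap_eq (x y : V) (Q : List V) (s : Finset V) (hxy : ¬ e x y) (hyx : ¬ e y x) :
    expFollows e p (x :: y :: Q) s = expFollows e p (y :: x :: Q) s := by
  have h := swap_diff e p x y Q s hxy
  rw [filter_insert, if_neg hyx] at h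
  have : expFollows e p (y :: x :: Q) s - expFollows e p (x :: y :: Q) s = 0 := by
    rw [h]; ring
  linarith

lemma swap_lt (hp01 : ∀ w φ, 0 < p w φ ∧ p w φ < 1)
    (hmono : ∀ w φ φ', φ < φ' → p w φ < p w φ')
    (x y : V) (Q : List V) (s : Finset V) (hxy : ¬ e x y) (hyx : e y x) (hys : y ∉ s) :
    expFollows e p (x :: y :: Q) s < expFollows e p (y :: x :: Q) s := by
  have hmono' : ∀ w φ φ', φ ≤ φ' → p w φ ≤ p w φ' := fun w φ φ' h =>
    h.lt_or_eq.elim (fun h => (hmono w _ _ h).le) (fun h => by rw [h])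
  have h := swap_diff e p x y Q s hxy
  have hcard : ((insert y s).filter (fun u => e u x)).card
      = (s.filter (fun u => e u x)).card + 1 := by
    rw [filter_insert, if_pos hyx, card_insert_of_notMem (fun hm => hys (mem_filter.1 hm).1)]
  rw [hcard] at h
  have ha : 0 < p y ((s.filter (fun u => e u y)).card) := (hp01 _ _).1
  have hb : p x ((s.filter (fun u => e u x)).card)
      < p x ((s.filter (fun u => e u x)).card + 1) := hmono _ _ _ (Nat.lt_succ_self _)
  have hDC : expFollows e p Q (insert y s) ≤ expFollows e p Q (insert x (insert y s)) :=
    expFollows_mono e p hp01 hmono' Q _ _ (subset_insert _ _)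
  nlinarith [mul_pos (mul_pos ha (sub_pos.2 hb)) (by linarith : (0:ℝ) <
    1 + expFollows e p Q (insert x (insert y s)) - expFollows e p Q (insert y s))]

lemma prefix_lift_eq (A B : List V) (h : ∀ s, expFollows e p A s = expFollows e p B s) :
    ∀ (P : List V) (s : Finset V), expFollows e p (P ++ A) s = expFollows e p (P ++ B) s := by
  intro P
  induction P with
  | nil => intro s; exact h s
  | cons a P ih => intro s; rw [List.cons_append, List.cons_append,
      expFollows_cons, expFollows_cons, ih, ih]

lemma prefix_lift_lt (hp01 : ∀ w φ, 0 < p w φ ∧ p w φ < 1) (A B : List V) (y : V)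
    (h : ∀ s, y ∉ s → expFollows e p A s < expFollows e p B s) :
    ∀ (P : List V) (s : Finset V), y ∉ P → y ∉ s →
      expFollows e p (P ++ A) s < expFollows e p (P ++ B) s := by
  intro P
  induction P with
  | nil => intro s _ hs; exact h s hs
  | cons a P ih =>
    intro s hyP hys
    have hya : y ≠ a := fun hh => hyP (by simp [hh])
    have h1 := ih (insert a s) (fun hh => hyP (List.mem_cons_of_mem _ hh))
      (by simp [Finset.mem_insert, hya, hys])
    have h2 := ih s (fun hh => hyP (List.mem_cons_of_mem _ hh)) hys
    rw [List.cons_append, List.cons_append, expFollows_cons, expFollows_cons]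
    obtain ⟨h0, h1'⟩ := hp01 a (s.filter (fun u => e u a)).card
    nlinarith

end AuxA

section AuxB
set_option linter.unusedSectionVars false
open List

variable {V : Type*} [DecidableEq V]

def invCount (ord : V → ℕ) : List V → ℕ
  | [] => 0
  | a :: l => l.countP (fun b => decide (ord b < ord a)) + invCount ord l

lemma countP_swap (f : V → Bool) (x y : V) (Q : List V) :
    (x :: y :: Q).countP f = (y :: x :: Q).countP f := by
  simp only [List.countP_cons]; omega

lemma invCount_swap_lt (ord : V → ℕ) (x y : V) (h : ord y < ord x) :
    ∀ (P Q : List V), invCount ord (P ++ y :: x :: Q) < invCount ord (P ++ x :: y :: Q) := by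
  intro P
  induction P with
  | nil =>
    intro Q
    simp only [List.nil_append, invCount, List.countP_cons]
    have h1 : decide (ord y < ord x) = true := by simp [h]
    have h2 : decide (ord x < ord y) = false := by simp; omega
    simp [h1, h2]; omega
  | cons a P ih =>
    intro Q
    simp only [List.cons_append, invCount, List.countP_append, List.append_eq]
    have := countP_swap (fun b => decide (ord b < ord a)) x y Q
    have := ih Q
    omega

lemma descent_exists (r : V → V → Prop) [DecidableRel r] :
    ∀ (L : List V), ¬ List.Chain' r L →
      ∃ P x y Q, L = P ++ x :: y :: Q ∧ ¬ r x y := by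
  intro L
  induction L with
  | nil => intro h; exact absurd List.isChain_nil h
  | cons a l ih =>
    intro h
    match l, ih with
    | [], _ => exact absurd (List.isChain_singleton a) h
    | b :: t, ih =>
      simp only [List.Chain', List.isChain_cons_cons] at h
      by_cases hab : r a b
      · have : ¬ List.Chain' r (b :: t) := fun hc => h ⟨hab, hc⟩
        obtain ⟨P, x, y, Q, hd, hr⟩ := ih this
        exact ⟨a :: P, x, y, Q, by rw [hd]; rfl, hr⟩
      · exact ⟨[], a, b, t, rfl, hab⟩

lemma idx_transfer (P Q : List V) (x y : V) (hnd : (P ++ x :: y :: Q).Nodup)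
    (u v : V) (h1 : ¬(u = x ∧ v = y)) (h2 : ¬(u = y ∧ v = x)) :
    (P ++ y :: x :: Q).idxOf u < (P ++ y :: x :: Q).idxOf v →
      (P ++ x :: y :: Q).idxOf u < (P ++ x :: y :: Q).idxOf v := by
  have hnd' := hnd
  rw [List.nodup_append] at hnd'
  obtain ⟨hndP, hndM, hdisj⟩ := hnd'
  have hxP : x ∉ P := fun hh => hdisj _ hh _ (by simp) rfl
  have hyP : y ∉ P := fun hh => hdisj _ hh _ (by simp) rfl
  have hxy : x ≠ y := by
    have := hndM; rw [List.nodup_cons] at this; exact fun hh => this.1 (hh ▸ by simp)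
  set L1 := P ++ x :: y :: Q with hL1
  set L2 := P ++ y :: x :: Q with hL2
  have key : ∀ w : V,
      (L1.idxOf w = L2.idxOf w ∧
        (L1.idxOf w < P.length ∨ P.length + 2 ≤ L1.idxOf w)) ∨
      (w = x ∧ L1.idxOf w = P.length ∧ L2.idxOf w = P.length + 1) ∨
      (w = y ∧ L1.idxOf w = P.length + 1 ∧ L2.idxOf w = P.length) := by
    intro w
    by_cases hwx : w = x
    · subst hwx
      right; left
      refine ⟨rfl, ?_, ?_⟩
      · rw [hL1, idxOf_append_of_notMem hxP, idxOf_cons_self]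
        try omega
      · rw [hL2, idxOf_append_of_notMem hxP, idxOf_cons_ne _ (Ne.symm hxy),
          idxOf_cons_self]
        try omega
    · by_cases hwy : w = y
      · subst hwy
        right; right
        refine ⟨rfl, ?_, ?_⟩
        · rw [hL1, idxOf_append_of_notMem hyP, idxOf_cons_ne _ hxy, idxOf_cons_self]
          try omega
        · rw [hL2, idxOf_append_of_notMem hyP, idxOf_cons_self]
          try omega
      · left
        by_cases hwP : w ∈ P
        · constructor
          · rw [hL1, hL2, idxOf_append_of_mem hwP, idxOf_append_of_mem hwP]
          · left
            rw [hL1, idxOf_append_of_mem hwP]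
            exact idxOf_lt_length_iff.2 hwP
        · have e1 : L1.idxOf w = P.length + (Q.idxOf w + 2) := by
            rw [hL1, idxOf_append_of_notMem hwP, idxOf_cons_ne _ (Ne.symm hwx),
              idxOf_cons_ne _ (Ne.symm hwy)]
            try omega
          have e2 : L2.idxOf w = P.length + (Q.idxOf w + 2) := by
            rw [hL2, idxOf_append_of_notMem hwP, idxOf_cons_ne _ (Ne.symm hwy),
              idxOf_cons_ne _ (Ne.symm hwx)]
            try omega
          rw [e1, e2]
          exact ⟨rfl, by omega⟩
  intro hlt
  rcases key u with ⟨eu, bu⟩ | ⟨hux, eu1, eu2⟩ | ⟨huy, eu1, eu2⟩ <;>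
    rcases key v with ⟨ev, bv⟩ | ⟨hvx, ev1, ev2⟩ | ⟨hvy, ev1, ev2⟩
  · omega
  · omega
  · omega
  · omega
  · omega
  · exact absurd ⟨hux, hvy⟩ h1
  · omega
  · exact absurd ⟨huy, hvx⟩ h2
  · omega

lemma sorted_case (e : V → V → Prop) (ord : V → ℕ)
    (hacyc : ∀ u v, e u v → ord u < ord v) (L : List V)
    (hch : List.Chain' (fun a b => ord a ≤ ord b) L)
    (hmem : ∀ w : V, w ∈ L) (u v : V) (huv : e u v) :
    L.idxOf u < L.idxOf v := by
  haveI : Trans (fun a b : V => ord a ≤ ord b) (fun a b : V => ord a ≤ ord b) (fun a b : V => ord a ≤ ord b) := ⟨fun h1 h2 => le_trans h1 h2⟩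
  have hpw := List.isChain_iff_pairwise.1 hch
  by_contra hcon
  push_neg at hcon
  have hne : u ≠ v := fun h => by
    have h2 := hacyc u v huv; rw [h] at h2; exact lt_irrefl _ h2
  have hlt : L.idxOf v < L.idxOf u :=
    lt_of_le_of_ne hcon (fun h => hne ((List.idxOf_inj (hmem v)).1 h).symm)
  have h1 : L.idxOf v < L.length := List.idxOf_lt_length_iff.2 (hmem v)
  have h2 : L.idxOf u < L.length := List.idxOf_lt_length_iff.2 (hmem u)
  have := List.pairwise_iff_get.1 hpw ⟨L.idxOf v, h1⟩ ⟨L.idxOf u, h2⟩ hlt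
  rw [List.idxOf_get, List.idxOf_get] at this
  have := hacyc u v huv
  omega


lemma main_aux (e : V → V → Prop) [DecidableRel e] (ord : V → ℕ)
    (hacyc : ∀ u v, e u v → ord u < ord v) (p : V → ℕ → ℝ)
    (hp01 : ∀ w φ, 0 < p w φ ∧ p w φ < 1)
    (hmono : ∀ w φ φ', φ < φ' → p w φ < p w φ') :
    ∀ n : ℕ, ∀ L : List V, invCount ord L = n → L.Nodup → (∀ w : V, w ∈ L) →
      (∀ L' : List V, L'.Nodup → (∀ w : V, w ∈ L') →
        expFollows e p L' ∅ ≤ expFollows e p L ∅) →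
      ∀ u v, e u v → L.idxOf u < L.idxOf v := by
  intro n
  induction n using Nat.strong_induction_on with
  | _ n ih =>
    intro L hinv hnd hmem hopt u v huv
    by_cases hch : List.Chain' (fun a b => ord a ≤ ord b) L
    · exact sorted_case e ord hacyc L hch hmem u v huv
    · obtain ⟨P, x, y, Q, hdec, hxy⟩ := descent_exists (fun a b => ord a ≤ ord b) L hch
      subst hdec
      have hordyx : ord y < ord x := by omega
      have hnexy : ¬ e x y := fun h => by have := hacyc x y h; omega
      have hperm : List.Perm (P ++ y :: x :: Q) (P ++ x :: y :: Q) :=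
        (List.Perm.swap x y Q).append_left P
      have hnd' : (P ++ y :: x :: Q).Nodup := hperm.nodup_iff.2 hnd
      have hmem' : ∀ w : V, w ∈ P ++ y :: x :: Q := fun w => hperm.mem_iff.2 (hmem w)
      have hyP : y ∉ P := by
        rw [List.nodup_append] at hnd
        exact fun hh => hnd.2.2 _ hh _ (by simp) rfl
      by_cases hyx : e y x
      · exfalso
        have hstrict : expFollows e p (P ++ x :: y :: Q) ∅ <
            expFollows e p (P ++ y :: x :: Q) ∅ :=
          prefix_lift_lt e p hp01 (x :: y :: Q) (y :: x :: Q) y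
            (fun s hs => swap_lt e p hp01 hmono x y Q s hnexy hyx hs) P ∅ hyP
            (Finset.notMem_empty y)
        exact absurd (hopt _ hnd' hmem') (not_le.2 hstrict)
      · have heq : expFollows e p (P ++ x :: y :: Q) ∅ =
            expFollows e p (P ++ y :: x :: Q) ∅ :=
          prefix_lift_eq e p _ _ (fun s => swap_eq e p x y Q s hnexy hyx) P ∅
        have hopt' : ∀ L' : List V, L'.Nodup → (∀ w : V, w ∈ L') →
            expFollows e p L' ∅ ≤ expFollows e p (P ++ y :: x :: Q) ∅ :=
          fun L' h1 h2 => heq ▸ hopt L' h1 h2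
        have hless : invCount ord (P ++ y :: x :: Q) < n := by
          have := invCount_swap_lt ord x y hordyx P Q
          omega
        have hres := ih (invCount ord (P ++ y :: x :: Q)) hless
          (P ++ y :: x :: Q) rfl hnd' hmem' hopt' u v huv
        exact idx_transfer P Q x y hnd u v
          (fun hh => hnexy (hh.1 ▸ hh.2 ▸ huv))
          (fun hh => hyx (hh.1 ▸ hh.2 ▸ huv)) hres

end AuxB

/-- On a finite DAG, with follow probabilities `p v φ` strictly in `(0,1)` and
strictly increasing in the overlap `φ`, every ordering (policy) maximizing the
expected total number of successes is a linear extension of the DAG: every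
vertex is processed after all of its in-neighbors. -/
theorem optimal_policy_is_linear_extension {V : Type*} [Fintype V] [DecidableEq V]
    (e : V → V → Prop) [DecidableRel e]
    (ord : V → ℕ) (hacyc : ∀ u v, e u v → ord u < ord v)
    (p : V → ℕ → ℝ)
    (hp01 : ∀ w φ, 0 < p w φ ∧ p w φ < 1)
    (hmono : ∀ w φ φ', φ < φ' → p w φ < p w φ')
    (L : List V) (hL : L.Nodup ∧ ∀ w : V, w ∈ L)
    (hopt : ∀ L' : List V, L'.Nodup → (∀ w : V, w ∈ L') →
      expFollows e p L' ∅ ≤ expFollows e p L ∅) :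
    ∀ u v, e u v → L.idxOf u < L.idxOf v := by
  obtain ⟨hnd, hmem⟩ := hL
  exact main_aux e ord hacyc p hp01 hmono (invCount ord L) L rfl hnd hmem hopt
end
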